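/- Let λ > 0 and let κ be a standard kernel with inf_{0 ≤ x,y ≤ 1} κ(x,y) > 0. Then there exists α* > −1 and a unique probability measure π on [0,1] which is absolutely continuous with respect to Lebesgue measure and whose density p satisfies p(x) = (λ/(1+α*)) ∫_0^1 κ(x,u) p(u) du for almost every x ∈ [0,1]. -/

import Mathlib

open MeasureTheory Filter
open scoped ENNReal Classical

noncomputable section

open scoped Topology


local notation "I01" => Set.Icc (0:ℝ) 1
local notation "μ01" => volume.restrict (Set.Icc (0:ℝ) 1)

structure Ker (κ : ℝ → ℝ → ℝ) (m : ℝ) : Prop where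
  hm : 0 < m
  hm1 : m ≤ 1
  meas : Measurable (Function.uncurry κ)
  lb : ∀ x ∈ I01, ∀ u ∈ I01, m ≤ κ x u
  ub : ∀ x ∈ I01, ∀ u ∈ I01, κ x u ≤ 1

/-- the kernel operator -/
def Kop (κ : ℝ → ℝ → ℝ) (f : ℝ → ℝ) (x : ℝ) : ℝ := ∫ u in I01, κ x u * f u

def Iop (κ : ℝ → ℝ → ℝ) (f : ℝ → ℝ) : ℝ := ∫ x in I01, Kop κ f x

structure Good (κ : ℝ → ℝ → ℝ) (m : ℝ) (f : ℝ → ℝ) : Prop where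
  meas : Measurable f
  nonneg : ∀ x, 0 ≤ f x
  lb : ∀ x ∈ I01, m ≤ f x
  ub : ∀ x ∈ I01, f x ≤ 1/m
  zero : ∀ x ∉ I01, f x = 0
  int_one : ∫ x in I01, f x = 1

instance : IsFiniteMeasure (volume.restrict (Set.Icc (0:ℝ) 1)) := by
  constructor
  rw [Measure.restrict_apply_univ]
  simp [Real.volume_Icc]

lemma vol01 : (volume (Set.Icc (0:ℝ) 1)) = 1 := by simp [Real.volume_Icc]

lemma integrableOn_of_bounded {f : ℝ → ℝ} (hf : Measurable f) {C : ℝ}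
    (h : ∀ x ∈ I01, |f x| ≤ C) : IntegrableOn f I01 := by
  have : IsFiniteMeasure μ01 := by
    constructor; rw [Measure.restrict_apply_univ, vol01]; exact ENNReal.one_lt_top
  refine ⟨hf.aestronglyMeasurable, ?_⟩
  apply HasFiniteIntegral.of_bounded (C := C)
  rw [ae_restrict_iff' measurableSet_Icc]
  exact Eventually.of_forall fun x hx => h x hx

lemma measurable_Kop {κ : ℝ → ℝ → ℝ} (hκ : Measurable (Function.uncurry κ))
    {f : ℝ → ℝ} (hf : Measurable f) : Measurable (Kop κ f) := by
  have : StronglyMeasurable (fun p : ℝ × ℝ => κ p.1 p.2 * f p.2) :=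
    (hκ.mul (hf.comp measurable_snd)).stronglyMeasurable
  exact this.integral_prod_right'.measurable

section Basic
variable {κ : ℝ → ℝ → ℝ} {m : ℝ} (hK : Ker κ m)
include hK

lemma Ker.knn {x u : ℝ} (hx : x ∈ I01) (hu : u ∈ I01) : 0 ≤ κ x u :=
  le_trans hK.hm.le (hK.lb x hx u hu)

/-- integrability of the integrand against a nonneg integrable density -/
lemma integrable_kernel_mul {f : ℝ → ℝ} (hf : Measurable f) (hnn : ∀ x, 0 ≤ f x)
    (hfi : IntegrableOn f I01) {x : ℝ} (hx : x ∈ I01) :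
    IntegrableOn (fun u => κ x u * f u) I01 := by
  have hmeas : Measurable (fun u => κ x u * f u) := by
    have : Measurable (fun u => κ x u) := hK.meas.comp (measurable_prodMk_left)
    exact this.mul hf
  refine Integrable.mono hfi hmeas.aestronglyMeasurable ?_
  rw [ae_restrict_iff' measurableSet_Icc]
  refine Eventually.of_forall fun u hu => ?_
  rw [Real.norm_eq_abs, Real.norm_eq_abs, abs_of_nonneg (mul_nonneg (hK.knn hx hu) (hnn u)),
    abs_of_nonneg (hnn u)]
  calc κ x u * f u ≤ 1 * f u := mul_le_mul_of_nonneg_right (hK.ub x hx u hu) (hnn u)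
  _ = f u := one_mul _

omit hK in
lemma Good.integrableOn {f : ℝ → ℝ} (hf : Good κ m f) : IntegrableOn f I01 :=
  integrableOn_of_bounded hf.meas (fun x hx => by
    rw [abs_of_nonneg (hf.nonneg x)]; exact hf.ub x hx)

lemma Kop_lb {f : ℝ → ℝ} (hf : Good κ m f) {x : ℝ} (hx : x ∈ I01) : m ≤ Kop κ f x := by
  have h1 : ∫ u in I01, m * f u = m := by
    rw [integral_const_mul, hf.int_one, mul_one]
  rw [← h1]
  refine setIntegral_mono_on (hf.integrableOn.const_mul m)
    (integrable_kernel_mul hK hf.meas hf.nonneg hf.integrableOn hx) measurableSet_Icc ?_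
  exact fun u hu => mul_le_mul_of_nonneg_right (hK.lb x hx u hu) (hf.nonneg u)

lemma Kop_ub {f : ℝ → ℝ} (hf : Good κ m f) {x : ℝ} (hx : x ∈ I01) : Kop κ f x ≤ 1 := by
  rw [show (1:ℝ) = ∫ u in I01, f u from hf.int_one.symm]
  refine setIntegral_mono_on
    (integrable_kernel_mul hK hf.meas hf.nonneg hf.integrableOn hx) hf.integrableOn
    measurableSet_Icc ?_
  intro u hu
  calc κ x u * f u ≤ 1 * f u := mul_le_mul_of_nonneg_right (hK.ub x hx u hu) (hf.nonneg u)
  _ = f u := one_mul _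

lemma Kop_integrableOn {f : ℝ → ℝ} (hf : Good κ m f) : IntegrableOn (Kop κ f) I01 :=
  integrableOn_of_bounded (measurable_Kop hK.meas hf.meas) (C := 1) (fun x hx => by
    rw [abs_le]
    constructor
    · linarith [Kop_lb hK hf hx, hK.hm]
    · exact Kop_ub hK hf hx)

lemma Iop_lb {f : ℝ → ℝ} (hf : Good κ m f) : m ≤ Iop κ f := by
  have : ∫ (_ : ℝ) in I01, m = m := by
    rw [setIntegral_const, measureReal_def, vol01]; simp
  rw [← this]
  exact setIntegral_mono_on (integrableOn_const (by rw [vol01]; exact ENNReal.one_ne_top))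
    (Kop_integrableOn hK hf) measurableSet_Icc (fun x hx => Kop_lb hK hf hx)

lemma Iop_ub {f : ℝ → ℝ} (hf : Good κ m f) : Iop κ f ≤ 1 := by
  have : ∫ (_ : ℝ) in I01, (1:ℝ) = 1 := by
    rw [setIntegral_const, measureReal_def, vol01]; simp
  rw [← this]
  exact setIntegral_mono_on (Kop_integrableOn hK hf)
    (integrableOn_const (by rw [vol01]; exact ENNReal.one_ne_top))
    measurableSet_Icc (fun x hx => Kop_ub hK hf hx)

lemma Iop_pos {f : ℝ → ℝ} (hf : Good κ m f) : 0 < Iop κ f := lt_of_lt_of_le hK.hm (Iop_lb hK hf)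

end Basic

/-- normalized iteration map -/
def Tmap (κ : ℝ → ℝ → ℝ) (f : ℝ → ℝ) : ℝ → ℝ :=
  (Set.Icc (0:ℝ) 1).indicator (fun x => Kop κ f x / Iop κ f)

section Step
variable {κ : ℝ → ℝ → ℝ} {m : ℝ} (hK : Ker κ m)
include hK

lemma Tmap_good {f : ℝ → ℝ} (hf : Good κ m f) : Good κ m (Tmap κ f) := by
  have hIpos := Iop_pos hK hf
  have hIub := Iop_ub hK hf
  have hIlb := Iop_lb hK hf
  refine ⟨?_, ?_, ?_, ?_, ?_, ?_⟩
  · exact ((measurable_Kop hK.meas hf.meas).div_const _).indicator measurableSet_Icc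
  · intro x
    by_cases hx : x ∈ I01
    · rw [Tmap, Set.indicator_of_mem hx]
      exact div_nonneg (le_trans hK.hm.le (Kop_lb hK hf hx)) hIpos.le
    · rw [Tmap, Set.indicator_of_notMem hx]
  · intro x hx
    rw [Tmap, Set.indicator_of_mem hx]
    rw [le_div_iff₀ hIpos]
    calc m * Iop κ f ≤ m * 1 := by nlinarith [hK.hm, hIub]
    _ ≤ Kop κ f x := by rw [mul_one]; exact Kop_lb hK hf hx
  · intro x hx
    rw [Tmap, Set.indicator_of_mem hx]
    rw [div_le_div_iff₀ hIpos hK.hm]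
    calc Kop κ f x * m ≤ 1 * m := by nlinarith [Kop_ub hK hf hx, hK.hm]
    _ ≤ 1 * Iop κ f := by nlinarith [hIlb]
  · intro x hx; rw [Tmap, Set.indicator_of_notMem hx]
  · have : ∫ x in I01, Tmap κ f x = ∫ x in I01, Kop κ f x / Iop κ f := by
      refine setIntegral_congr_fun measurableSet_Icc (fun x hx => ?_)
      rw [Tmap, Set.indicator_of_mem hx]
    rw [this, integral_div]
    exact div_self hIpos.ne'

/-- if `A·g ≤ f` on `I01` with `A ≤ 1` then `(A + m(1-A))·Kg ≤ Kf` -/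
lemma key_lb {f g : ℝ → ℝ} (hf : Good κ m f) (hg : Good κ m g) {A : ℝ}
    (hA0 : 0 ≤ A) (hA1 : A ≤ 1) (hAle : ∀ x ∈ I01, A * g x ≤ f x) :
    ∀ x ∈ I01, (A + m * (1 - A)) * Kop κ g x ≤ Kop κ f x := by
  intro x hx
  have hfi := integrable_kernel_mul hK hf.meas hf.nonneg hf.integrableOn hx
  have hgi := integrable_kernel_mul hK hg.meas hg.nonneg hg.integrableOn hx
  have h1 : m * (1 - A) ≤ Kop κ f x - A * Kop κ g x := by
    have heq : Kop κ f x - A * Kop κ g x = ∫ u in I01, (κ x u * f u - A * (κ x u * g u)) := by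
      rw [integral_sub hfi (hgi.const_mul A), Kop, Kop, integral_const_mul]
    have heq2 : m * (1 - A) = ∫ u in I01, (m * f u - A * (m * g u)) := by
      rw [integral_sub (hf.integrableOn.const_mul m) ((hg.integrableOn.const_mul m).const_mul A),
        integral_const_mul, integral_const_mul, integral_const_mul, hf.int_one, hg.int_one]
      ring
    rw [heq, heq2]
    refine setIntegral_mono_on
      (((hf.integrableOn.const_mul m).sub ((hg.integrableOn.const_mul m).const_mul A)))
      (hfi.sub (hgi.const_mul A)) measurableSet_Icc (fun u hu => ?_)
    have h3 : 0 ≤ f u - A * g u := by linarith [hAle u hu]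
    have h4 : m * (f u - A * g u) ≤ κ x u * (f u - A * g u) :=
      mul_le_mul_of_nonneg_right (hK.lb x hx u hu) h3
    nlinarith [h4]
  have h2 : m * (1 - A) * Kop κ g x ≤ m * (1 - A) :=
    mul_le_of_le_one_right (mul_nonneg hK.hm.le (by linarith)) (Kop_ub hK hg hx)
  nlinarith [h1, h2]

/-- if `f ≤ B·g` on `I01` with `1 ≤ B` then `Kf ≤ (B - m(B-1))·Kg` -/
lemma key_ub {f g : ℝ → ℝ} (hf : Good κ m f) (hg : Good κ m g) {B : ℝ}
    (hB1 : 1 ≤ B) (hBge : ∀ x ∈ I01, f x ≤ B * g x) :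
    ∀ x ∈ I01, Kop κ f x ≤ (B - m * (B - 1)) * Kop κ g x := by
  intro x hx
  have hfi := integrable_kernel_mul hK hf.meas hf.nonneg hf.integrableOn hx
  have hgi := integrable_kernel_mul hK hg.meas hg.nonneg hg.integrableOn hx
  have h1 : m * (B - 1) ≤ B * Kop κ g x - Kop κ f x := by
    have heq : B * Kop κ g x - Kop κ f x = ∫ u in I01, (B * (κ x u * g u) - κ x u * f u) := by
      rw [integral_sub (hgi.const_mul B) hfi, Kop, Kop, integral_const_mul]
    have heq2 : m * (B - 1) = ∫ u in I01, (B * (m * g u) - m * f u) := by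
      rw [integral_sub ((hg.integrableOn.const_mul m).const_mul B) (hf.integrableOn.const_mul m),
        integral_const_mul, integral_const_mul, integral_const_mul, hf.int_one, hg.int_one]
      ring
    rw [heq, heq2]
    refine setIntegral_mono_on
      (((hg.integrableOn.const_mul m).const_mul B).sub (hf.integrableOn.const_mul m))
      ((hgi.const_mul B).sub hfi) measurableSet_Icc (fun u hu => ?_)
    have h3 : 0 ≤ B * g u - f u := by linarith [hBge u hu]
    have h4 : m * (B * g u - f u) ≤ κ x u * (B * g u - f u) :=
      mul_le_mul_of_nonneg_right (hK.lb x hx u hu) h3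
    nlinarith [h4]
  have h2 : m * (B - 1) * Kop κ g x ≤ m * (B - 1) :=
    mul_le_of_le_one_right (mul_nonneg hK.hm.le (by linarith)) (Kop_ub hK hg hx)
  nlinarith [h1, h2]

end Step

/-- The pure real-analysis contraction estimate. -/
lemma logcontr {m a b : ℝ} (hm : 0 < m) (hm1 : m ≤ 1) (ha2 : m^2 ≤ a) (ha1 : a ≤ 1)
    (hb1 : 1 ≤ b) (hb2 : b ≤ 1/m^2) :
    Real.log (b - m*(b-1)) - Real.log (a + m*(1-a)) ≤
      (1 - m^3) * (Real.log b - Real.log a) := by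
  have ha0 : 0 < a := lt_of_lt_of_le (by positivity) ha2
  have hb0 : (0:ℝ) < b := by linarith
  set Bp := b - m*(b-1) with hBp
  set Ap := a + m*(1-a) with hAp
  have hBp1 : 1 ≤ Bp := by nlinarith
  have hBpb : Bp ≤ b := by nlinarith
  have hBp0 : 0 < Bp := by linarith
  have hAp0 : 0 < Ap := by nlinarith
  have hlogb0 : 0 ≤ Real.log b := Real.log_nonneg hb1
  have hloga0 : Real.log a ≤ 0 := Real.log_nonpos ha0.le ha1
  -- B side
  have hBside : Real.log Bp ≤ (1 - m^3) * Real.log b := by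
    have h1 : Real.log (Bp/b) ≤ Bp/b - 1 := Real.log_le_sub_one_of_pos (by positivity)
    have h2 : Real.log (Bp/b) = Real.log Bp - Real.log b := Real.log_div hBp0.ne' hb0.ne'
    have h3 : Bp/b - 1 = -(m*(b-1)/b) := by field_simp; ring
    have h4 : Real.log b ≤ b - 1 := by
      have := Real.log_le_sub_one_of_pos hb0; linarith
    have h5 : m^3 * Real.log b ≤ m*(b-1)/b := by
      have h6 : m^3 * Real.log b ≤ m^3 * (b-1) := mul_le_mul_of_nonneg_left h4 (by positivity)
      have h7 : m^3 * (b-1) ≤ m*(b-1)/b := by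
        rw [le_div_iff₀ hb0]
        have : m^2 * b ≤ 1 := by
          rw [show (1:ℝ)/m^2 = (m^2)⁻¹ by ring] at hb2
          calc m^2 * b ≤ m^2 * (m^2)⁻¹ := by nlinarith
          _ = 1 := by field_simp
        nlinarith
      linarith
    linarith [h1, h2.symm.le, h5]
  -- A side (Bernoulli)
  have hAside : (1 - m) * Real.log a ≤ Real.log Ap := by
    have hB : a ^ (1 - m) ≤ Ap := by
      have := rpow_one_add_le_one_add_mul_self (s := a - 1) (by linarith) (p := 1 - m)
        (by linarith) (by linarith)
      have e1 : (1 : ℝ) + (a - 1) = a := by ring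
      rw [e1] at this
      nlinarith [this]
    calc (1 - m) * Real.log a = Real.log (a ^ (1 - m)) := (Real.log_rpow ha0 _).symm
    _ ≤ Real.log Ap := Real.log_le_log (by positivity) hB
  have hmono : (1 - m) * (- Real.log a) ≤ (1 - m^3) * (- Real.log a) :=
    mul_le_mul_of_nonneg_right (by nlinarith) (by linarith)
  have : - Real.log Ap ≤ (1 - m^3) * (- Real.log a) := by
    have : - Real.log Ap ≤ (1 - m) * (- Real.log a) := by linarith [hAside]
    linarith
  linarith [hBside, this]

def Rset (p q : ℝ → ℝ) : Set ℝ := (fun x => p x / q x) '' (Set.Icc (0:ℝ) 1)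
def rA (p q : ℝ → ℝ) : ℝ := sInf (Rset p q)
def rB (p q : ℝ → ℝ) : ℝ := sSup (Rset p q)

section Ratio
variable {κ : ℝ → ℝ → ℝ} {m : ℝ} (hK : Ker κ m) {p q : ℝ → ℝ}
  (hp : Good κ m p) (hq : Good κ m q)
include hK hp hq

lemma Rset_nonempty : (Rset p q).Nonempty := by
  exact ⟨p 0 / q 0, ⟨0, Set.left_mem_Icc.2 zero_le_one, rfl⟩⟩

lemma Rset_bounds : ∀ y ∈ Rset p q, m^2 ≤ y ∧ y ≤ 1/m^2 := by
  rintro y ⟨x, hx, rfl⟩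
  have hq0 : 0 < q x := lt_of_lt_of_le hK.hm (hq.lb x hx)
  constructor
  · rw [le_div_iff₀ hq0]
    calc m^2 * q x ≤ m^2 * (1/m) := by nlinarith [hq.ub x hx, hK.hm]
    _ = m := by field_simp [pow_two]
    _ ≤ p x := hp.lb x hx
  · rw [div_le_iff₀ hq0]
    calc p x ≤ 1/m := hp.ub x hx
    _ = (1/m^2) * m := by field_simp [pow_two]
    _ ≤ (1/m^2) * q x := by
        have h0 : (0:ℝ) < 1/m^2 := div_pos one_pos (pow_pos hK.hm 2)
        nlinarith [hq.lb x hx, h0]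

lemma rA_lb : m^2 ≤ rA p q :=
  le_csInf (Rset_nonempty hK hp hq) (fun y hy => (Rset_bounds hK hp hq y hy).1)

lemma rB_ub : rB p q ≤ 1/m^2 :=
  csSup_le (Rset_nonempty hK hp hq) (fun y hy => (Rset_bounds hK hp hq y hy).2)

lemma Rset_bddBelow : BddBelow (Rset p q) :=
  ⟨m^2, fun y hy => (Rset_bounds hK hp hq y hy).1⟩

lemma Rset_bddAbove : BddAbove (Rset p q) :=
  ⟨1/m^2, fun y hy => (Rset_bounds hK hp hq y hy).2⟩

lemma rA_le_ratio : ∀ x ∈ I01, rA p q * q x ≤ p x := by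
  intro x hx
  have hq0 : 0 < q x := lt_of_lt_of_le hK.hm (hq.lb x hx)
  have h1 : rA p q ≤ p x / q x := csInf_le (Rset_bddBelow hK hp hq) ⟨x, hx, rfl⟩
  rw [← le_div_iff₀ hq0] at *
  exact h1

lemma ratio_le_rB : ∀ x ∈ I01, p x ≤ rB p q * q x := by
  intro x hx
  have hq0 : 0 < q x := lt_of_lt_of_le hK.hm (hq.lb x hx)
  have h1 : p x / q x ≤ rB p q := le_csSup (Rset_bddAbove hK hp hq) ⟨x, hx, rfl⟩
  rw [div_le_iff₀ hq0] at h1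
  linarith [h1]

lemma rA_le_one : rA p q ≤ 1 := by
  by_contra hcon
  push_neg at hcon
  have key : ∀ x ∈ I01, (rA p q - 1) * m ≤ p x - q x := by
    intro x hx
    have h1 := rA_le_ratio hK hp hq x hx
    have hqm := hq.lb x hx
    nlinarith [hq.ub x hx]
  have h2 : ∫ x in I01, (p x - q x) = 0 := by
    rw [integral_sub hp.integrableOn hq.integrableOn, hp.int_one, hq.int_one]; ring
  have h3 : (rA p q - 1) * m ≤ 0 := by
    have hc : ∫ (_ : ℝ) in I01, ((rA p q - 1) * m) = (rA p q - 1) * m := by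
      rw [setIntegral_const, measureReal_def, vol01]; simp
    rw [← h2, ← hc]
    exact setIntegral_mono_on
      (integrableOn_const (by rw [vol01]; exact ENNReal.one_ne_top))
      (hp.integrableOn.sub hq.integrableOn) measurableSet_Icc key
  nlinarith [hK.hm]

lemma one_le_rB : 1 ≤ rB p q := by
  by_contra hcon
  push_neg at hcon
  have key : ∀ x ∈ I01, (1 - rB p q) * m ≤ q x - p x := by
    intro x hx
    have h1 := ratio_le_rB hK hp hq x hx
    have hqm := hq.lb x hx
    nlinarith [hq.ub x hx]
  have h2 : ∫ x in I01, (q x - p x) = 0 := by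
    rw [integral_sub hq.integrableOn hp.integrableOn, hp.int_one, hq.int_one]; ring
  have h3 : (1 - rB p q) * m ≤ 0 := by
    have hc : ∫ (_ : ℝ) in I01, ((1 - rB p q) * m) = (1 - rB p q) * m := by
      rw [setIntegral_const, measureReal_def, vol01]; simp
    rw [← h2, ← hc]
    exact setIntegral_mono_on
      (integrableOn_const (by rw [vol01]; exact ENNReal.one_ne_top))
      (hq.integrableOn.sub hp.integrableOn) measurableSet_Icc key
  nlinarith [hK.hm]

end Ratio

section Dstep
variable {κ : ℝ → ℝ → ℝ} {m : ℝ} (hK : Ker κ m) {p q : ℝ → ℝ}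
  (hp : Good κ m p) (hq : Good κ m q)
include hK hp hq

lemma ratio_iter_bounds :
    ∀ y ∈ Rset (Tmap κ p) (Tmap κ q),
      (rA p q + m * (1 - rA p q)) * (Iop κ q / Iop κ p) ≤ y ∧
      y ≤ (rB p q - m * (rB p q - 1)) * (Iop κ q / Iop κ p) := by
  have ha0 : (0:ℝ) ≤ rA p q := le_trans (by positivity) (rA_lb hK hp hq)
  have hklb := key_lb hK hp hq ha0 (rA_le_one hK hp hq) (rA_le_ratio hK hp hq)
  have hkub := key_ub hK hp hq (one_le_rB hK hp hq) (ratio_le_rB hK hp hq)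
  have hIp := Iop_pos hK hp
  have hIq := Iop_pos hK hq
  rintro y ⟨x, hx, rfl⟩
  have hKp0 : 0 < Kop κ p x := lt_of_lt_of_le hK.hm (Kop_lb hK hp hx)
  have hKq0 : 0 < Kop κ q x := lt_of_lt_of_le hK.hm (Kop_lb hK hq hx)
  have he : Tmap κ p x / Tmap κ q x = (Kop κ p x / Kop κ q x) * (Iop κ q / Iop κ p) := by
    rw [Tmap, Tmap, Set.indicator_of_mem hx, Set.indicator_of_mem hx]
    field_simp
  dsimp only
  rw [he]
  have hρ : 0 < Iop κ q / Iop κ p := div_pos hIq hIp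
  constructor
  · refine mul_le_mul_of_nonneg_right ?_ hρ.le
    rw [le_div_iff₀ hKq0]
    exact hklb x hx
  · refine mul_le_mul_of_nonneg_right ?_ hρ.le
    rw [div_le_iff₀ hKq0]
    exact hkub x hx

lemma dstep :
    Real.log (rB (Tmap κ p) (Tmap κ q)) - Real.log (rA (Tmap κ p) (Tmap κ q)) ≤
      (1 - m^3) * (Real.log (rB p q) - Real.log (rA p q)) := by
  have hTp := Tmap_good hK hp
  have hTq := Tmap_good hK hq
  have hbd := ratio_iter_bounds hK hp hq
  set A₁ := rA p q + m * (1 - rA p q) with hA₁def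
  set B₁ := rB p q - m * (rB p q - 1) with hB₁def
  set ρ := Iop κ q / Iop κ p with hρdef
  have hρ : 0 < ρ := div_pos (Iop_pos hK hq) (Iop_pos hK hp)
  have ha0 : (0:ℝ) < rA p q := lt_of_lt_of_le (pow_pos hK.hm 2) (rA_lb hK hp hq)
  have hA₁0 : 0 < A₁ := by
    have := rA_le_one hK hp hq
    nlinarith [hK.hm]
  have hB₁1 : 1 ≤ B₁ := by
    have := one_le_rB hK hp hq
    nlinarith [hK.hm, hK.hm1]
  have hrA' : A₁ * ρ ≤ rA (Tmap κ p) (Tmap κ q) :=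
    le_csInf (Rset_nonempty hK hTp hTq) (fun y hy => (hbd y hy).1)
  have hrB' : rB (Tmap κ p) (Tmap κ q) ≤ B₁ * ρ :=
    csSup_le (Rset_nonempty hK hTp hTq) (fun y hy => (hbd y hy).2)
  have hrA'0 : 0 < rA (Tmap κ p) (Tmap κ q) := lt_of_lt_of_le (mul_pos hA₁0 hρ) hrA'
  have h1 : Real.log (rB (Tmap κ p) (Tmap κ q)) ≤ Real.log B₁ + Real.log ρ := by
    calc Real.log (rB (Tmap κ p) (Tmap κ q)) ≤ Real.log (B₁ * ρ) :=
        Real.log_le_log (lt_of_lt_of_le hrA'0 (csInf_le_csSup (Rset_nonempty hK hTp hTq) (Rset_bddBelow hK hTp hTq)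
          (Rset_bddAbove hK hTp hTq))) hrB'
    _ = Real.log B₁ + Real.log ρ := Real.log_mul (by linarith) hρ.ne'
  have h2 : Real.log A₁ + Real.log ρ ≤ Real.log (rA (Tmap κ p) (Tmap κ q)) := by
    calc Real.log A₁ + Real.log ρ = Real.log (A₁ * ρ) := (Real.log_mul hA₁0.ne' hρ.ne').symm
    _ ≤ Real.log (rA (Tmap κ p) (Tmap κ q)) := Real.log_le_log (mul_pos hA₁0 hρ) hrA'
  have hlc := logcontr hK.hm hK.hm1 (rA_lb hK hp hq) (rA_le_one hK hp hq)
    (one_le_rB hK hp hq) (rB_ub hK hp hq)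
  rw [← hA₁def, ← hB₁def] at hlc
  linarith

end Dstep

def iter (κ : ℝ → ℝ → ℝ) : ℕ → ℝ → ℝ
  | 0 => (Set.Icc (0:ℝ) 1).indicator (fun _ => 1)
  | (n+1) => Tmap κ (iter κ n)

def dseq (κ : ℝ → ℝ → ℝ) (n : ℕ) : ℝ :=
  Real.log (rB (iter κ (n+1)) (iter κ n)) - Real.log (rA (iter κ (n+1)) (iter κ n))

section Iter
variable {κ : ℝ → ℝ → ℝ} {m : ℝ} (hK : Ker κ m)
include hK

lemma iter_good : ∀ n, Good κ m (iter κ n) := by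
  intro n
  induction n with
  | zero =>
    refine ⟨measurable_const.indicator measurableSet_Icc, ?_, ?_, ?_, ?_, ?_⟩
    · intro x
      by_cases hx : x ∈ I01
      · rw [iter, Set.indicator_of_mem hx]; norm_num
      · rw [iter, Set.indicator_of_notMem hx]
    · intro x hx; rw [iter, Set.indicator_of_mem hx]; exact hK.hm1
    · intro x hx; rw [iter, Set.indicator_of_mem hx]
      rw [le_div_iff₀ hK.hm, one_mul]; exact hK.hm1
    · intro x hx; rw [iter, Set.indicator_of_notMem hx]
    · have : ∫ x in I01, iter κ 0 x = ∫ (_ : ℝ) in I01, (1:ℝ) := by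
        refine setIntegral_congr_fun measurableSet_Icc (fun x hx => ?_)
        rw [iter, Set.indicator_of_mem hx]
      rw [this, setIntegral_const, measureReal_def, vol01]; simp
  | succ n ih => exact Tmap_good hK ih

lemma dseq_nonneg (n : ℕ) : 0 ≤ dseq κ n := by
  have h1 := rA_le_one hK (iter_good hK (n+1)) (iter_good hK n)
  have h2 := one_le_rB hK (iter_good hK (n+1)) (iter_good hK n)
  have h3 : Real.log (rA (iter κ (n+1)) (iter κ n)) ≤ 0 :=
    Real.log_nonpos (le_trans (by positivity)
      (rA_lb hK (iter_good hK (n+1)) (iter_good hK n))) h1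
  have h4 : 0 ≤ Real.log (rB (iter κ (n+1)) (iter κ n)) := Real.log_nonneg h2
  rw [dseq]; linarith

lemma dseq_le (n : ℕ) : dseq κ n ≤ (1 - m^3)^n * dseq κ 0 := by
  induction n with
  | zero => simp
  | succ n ih =>
    have hstep := dstep hK (iter_good hK (n+1)) (iter_good hK n)
    have hγ : (0:ℝ) ≤ 1 - m^3 := by nlinarith [pow_le_one₀ hK.hm.le hK.hm1 (n := 3)]
    calc dseq κ (n+1) ≤ (1 - m^3) * dseq κ n := hstep
    _ ≤ (1 - m^3) * ((1 - m^3)^n * dseq κ 0) := mul_le_mul_of_nonneg_left ih hγ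
    _ = (1 - m^3)^(n+1) * dseq κ 0 := by ring

lemma dseq_le0 (n : ℕ) : dseq κ n ≤ dseq κ 0 := by
  have h := dseq_le hK n
  have hγ : (0:ℝ) ≤ 1 - m^3 := by nlinarith [pow_le_one₀ hK.hm.le hK.hm1 (n := 3)]
  have hγ1 : (1 - m^3)^n ≤ 1 := pow_le_one₀ hγ (by nlinarith [pow_pos hK.hm 3])
  nlinarith [dseq_nonneg hK 0]

lemma diff_bound_gen {p q : ℝ → ℝ} (hp : Good κ m p) (hq : Good κ m q) {D : ℝ}
    (hD : Real.log (rB p q) - Real.log (rA p q) ≤ D) :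
    ∀ x ∈ I01, |p x - q x| ≤
      (1/m) * Real.exp D * (Real.log (rB p q) - Real.log (rA p q)) := by
  intro x hx
  have ha := rA_le_ratio hK hp hq x hx
  have hb := ratio_le_rB hK hp hq x hx
  have ha1 := rA_le_one hK hp hq
  have hb1 := one_le_rB hK hp hq
  have ha0 : (0:ℝ) < rA p q := lt_of_lt_of_le (pow_pos hK.hm 2) (rA_lb hK hp hq)
  have hb0 : (0:ℝ) < rB p q := lt_of_lt_of_le ha0 (by linarith)
  have hqub := hq.ub x hx
  have hqlb := hq.lb x hx
  have hq0 : 0 ≤ q x := le_trans hK.hm.le hqlb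
  set d := Real.log (rB p q) - Real.log (rA p q) with hddef
  have hd0 : 0 ≤ d := by
    have : Real.log (rA p q) ≤ Real.log (rB p q) := Real.log_le_log ha0 (by linarith)
    linarith
  have hba : rB p q - rA p q ≤ Real.exp D * d := by
    have e1 : rB p q / rA p q = Real.exp d := by
      rw [hddef, Real.exp_sub, Real.exp_log ha0, Real.exp_log hb0]
    have e3 : rB p q - rA p q ≤ Real.exp d - 1 := by
      have e2 : rB p q - rA p q = rA p q * (rB p q / rA p q - 1) := by field_simp
      rw [e2, e1]
      have h8 : 0 ≤ Real.exp d - 1 := by have := Real.one_le_exp hd0; linarith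
      nlinarith
    have e4 : Real.exp d - 1 ≤ d * Real.exp d := by
      have h5 := Real.add_one_le_exp (-d)
      have h6 := Real.exp_pos d
      have h7 : Real.exp (-d) * Real.exp d = 1 := by rw [← Real.exp_add]; simp
      nlinarith
    have e5 : Real.exp d ≤ Real.exp D := Real.exp_le_exp.2 hD
    nlinarith [Real.exp_pos d]
  have hBA0 : 0 ≤ rB p q - rA p q := by linarith
  have habs : |p x - q x| ≤ (rB p q - rA p q) * (1/m) := by
    have hq1m : (rB p q - rA p q) * q x ≤ (rB p q - rA p q) * (1/m) :=
      mul_le_mul_of_nonneg_left hqub hBA0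
    rw [abs_le]
    constructor
    · nlinarith [ha, hb]
    · nlinarith [ha, hb]
  have h1m : (0:ℝ) ≤ 1/m := one_div_nonneg.mpr hK.hm.le
  calc |p x - q x| ≤ (rB p q - rA p q) * (1/m) := habs
  _ ≤ (Real.exp D * d) * (1/m) := mul_le_mul_of_nonneg_right hba h1m
  _ = (1/m) * Real.exp D * d := by ring

lemma diff_bound (n : ℕ) : ∀ x ∈ I01,
    |iter κ (n+1) x - iter κ n x| ≤
      ((1/m) * Real.exp (dseq κ 0) * dseq κ 0) * (1 - m^3)^n := by
  intro x hx
  have h1 := diff_bound_gen hK (iter_good hK (n+1)) (iter_good hK n)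
    (D := dseq κ 0) (dseq_le0 hK n) x hx
  have h2 := dseq_le hK n
  have hexp := (Real.exp_pos (dseq κ 0)).le
  have h1m : (0:ℝ) ≤ 1/m := one_div_nonneg.mpr hK.hm.le
  have hc : 0 ≤ 1/m * Real.exp (dseq κ 0) := mul_nonneg h1m hexp
  calc |iter κ (n+1) x - iter κ n x| ≤ (1/m) * Real.exp (dseq κ 0) * dseq κ n := h1
  _ = (1/m * Real.exp (dseq κ 0)) * dseq κ n := by ring
  _ ≤ (1/m * Real.exp (dseq κ 0)) * ((1 - m^3)^n * dseq κ 0) :=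
      mul_le_mul_of_nonneg_left h2 hc
  _ = ((1/m) * Real.exp (dseq κ 0) * dseq κ 0) * (1 - m^3)^n := by ring

end Iter

def plim (κ : ℝ → ℝ → ℝ) : ℝ → ℝ :=
  fun x => iter κ 0 x + ∑' n, (iter κ (n+1) x - iter κ n x)

lemma iter_zero_outside (κ : ℝ → ℝ → ℝ) : ∀ n, ∀ x ∉ I01, iter κ n x = 0 := by
  intro n x hx
  cases n with
  | zero => rw [iter, Set.indicator_of_notMem hx]
  | succ n => rw [iter, Tmap, Set.indicator_of_notMem hx]

section Limit
variable {κ : ℝ → ℝ → ℝ} {m : ℝ} (hK : Ker κ m)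
include hK

lemma gamma_mem : (0:ℝ) ≤ 1 - m^3 ∧ 1 - m^3 < 1 := by
  constructor
  · nlinarith [pow_le_one₀ hK.hm.le hK.hm1 (n := 3)]
  · nlinarith [pow_pos hK.hm 3]

lemma iter_summable (x : ℝ) : Summable (fun n => iter κ (n+1) x - iter κ n x) := by
  by_cases hx : x ∈ I01
  · have hγ := gamma_mem hK
    have hgeo : Summable (fun n : ℕ =>
        ((1/m) * Real.exp (dseq κ 0) * dseq κ 0) * (1 - m^3)^n) :=
      (summable_geometric_of_lt_one hγ.1 hγ.2).mul_left _
    refine Summable.of_abs (Summable.of_nonneg_of_le (fun n => abs_nonneg _)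
      (fun n => diff_bound hK n x hx) hgeo)
  · refine summable_of_ne_finset_zero (s := ∅) (fun n _ => ?_)
    rw [iter_zero_outside κ (n+1) x hx, iter_zero_outside κ n x hx, sub_zero]

lemma iter_tendsto (x : ℝ) :
    Tendsto (fun n => iter κ n x) atTop (𝓝 (plim κ x)) := by
  have hs := (iter_summable hK x).hasSum
  have h1 := hs.tendsto_sum_nat
  have h2 : ∀ n, iter κ n x =
      (∑ i ∈ Finset.range n, (iter κ (i+1) x - iter κ i x)) + iter κ 0 x := by
    intro n
    rw [Finset.sum_range_sub (f := fun i => iter κ i x)]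
    ring
  have h3 : Tendsto (fun n => (∑ i ∈ Finset.range n,
      (iter κ (i+1) x - iter κ i x)) + iter κ 0 x) atTop
      (𝓝 ((∑' n, (iter κ (n+1) x - iter κ n x)) + iter κ 0 x)) :=
    h1.add_const _
  have h4 : plim κ x = (∑' n, (iter κ (n+1) x - iter κ n x)) + iter κ 0 x := by
    rw [plim]; ring
  rw [h4]
  exact h3.congr (fun n => (h2 n).symm)

lemma plim_good : Good κ m (plim κ) := by
  have hmeas : Measurable (plim κ) :=
    measurable_of_tendsto_metrizable (fun n => (iter_good hK n).meas)
      (tendsto_pi_nhds.2 (iter_tendsto hK))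
  have hzero : ∀ x ∉ I01, plim κ x = 0 := by
    intro x hx
    have := iter_tendsto hK x
    have h0 : Tendsto (fun n => iter κ n x) atTop (𝓝 0) := by
      refine Tendsto.congr (fun n => (iter_zero_outside κ n x hx).symm) tendsto_const_nhds
    exact tendsto_nhds_unique this h0
  refine ⟨hmeas, ?_, ?_, ?_, hzero, ?_⟩
  · intro x
    exact ge_of_tendsto' (iter_tendsto hK x) (fun n => (iter_good hK n).nonneg x)
  · intro x hx
    exact ge_of_tendsto' (iter_tendsto hK x) (fun n => (iter_good hK n).lb x hx)
  · intro x hx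
    exact le_of_tendsto' (iter_tendsto hK x) (fun n => (iter_good hK n).ub x hx)
  · have hdct : Tendsto (fun n => ∫ x in I01, iter κ n x) atTop
        (𝓝 (∫ x in I01, plim κ x)) := by
      refine tendsto_integral_of_dominated_convergence (fun _ => 1/m)
        (fun n => (iter_good hK n).meas.aestronglyMeasurable)
        (integrable_const _) (fun n => ?_) ?_
      · rw [ae_restrict_iff' measurableSet_Icc]
        refine Eventually.of_forall (fun x hx => ?_)
        rw [Real.norm_eq_abs, abs_of_nonneg ((iter_good hK n).nonneg x)]
        exact (iter_good hK n).ub x hx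
      · exact Eventually.of_forall (fun x => iter_tendsto hK x)
    have hconst : Tendsto (fun _ : ℕ => (1:ℝ)) atTop (𝓝 1) := tendsto_const_nhds
    have := hdct.congr (fun n => (iter_good hK n).int_one)
    exact (tendsto_nhds_unique this hconst)

lemma Kop_tendsto {x : ℝ} (hx : x ∈ I01) :
    Tendsto (fun n => Kop κ (iter κ n) x) atTop (𝓝 (Kop κ (plim κ) x)) := by
  refine tendsto_integral_of_dominated_convergence (fun _ => 1/m)
    (fun n => ?_) (integrable_const _) (fun n => ?_) ?_
  · exact ((hK.meas.comp (measurable_prodMk_left)).mul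
      (iter_good hK n).meas).aestronglyMeasurable
  · rw [ae_restrict_iff' measurableSet_Icc]
    refine Eventually.of_forall (fun u hu => ?_)
    have h1 := (iter_good hK n).nonneg u
    have h2 := (iter_good hK n).ub u hu
    rw [Real.norm_eq_abs, abs_of_nonneg (mul_nonneg (hK.knn hx hu) h1)]
    calc κ x u * iter κ n u ≤ 1 * iter κ n u :=
      mul_le_mul_of_nonneg_right (hK.ub x hx u hu) h1
    _ ≤ 1/m := by rw [one_mul]; exact h2
  · refine Eventually.of_forall (fun u => ?_)
    exact (iter_tendsto hK u).const_mul _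

lemma Iop_tendsto :
    Tendsto (fun n => Iop κ (iter κ n)) atTop (𝓝 (Iop κ (plim κ))) := by
  refine tendsto_integral_of_dominated_convergence (fun _ => 1)
    (fun n => (measurable_Kop hK.meas (iter_good hK n).meas).aestronglyMeasurable)
    (integrable_const _) (fun n => ?_) ?_
  · rw [ae_restrict_iff' measurableSet_Icc]
    refine Eventually.of_forall (fun x hx => ?_)
    rw [Real.norm_eq_abs, abs_of_nonneg (le_trans hK.hm.le (Kop_lb hK (iter_good hK n) hx))]
    exact Kop_ub hK (iter_good hK n) hx
  · rw [ae_restrict_iff' measurableSet_Icc]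
    exact Eventually.of_forall (fun x hx => Kop_tendsto hK hx)

/-- the eigenfunction equation for the limit -/
lemma plim_eq {x : ℝ} (hx : x ∈ I01) :
    plim κ x = Kop κ (plim κ) x / Iop κ (plim κ) := by
  have h1 : Tendsto (fun n => iter κ (n+1) x) atTop (𝓝 (plim κ x)) :=
    (iter_tendsto hK x).comp (tendsto_add_atTop_nat 1)
  have h2 : Tendsto (fun n => Kop κ (iter κ n) x / Iop κ (iter κ n)) atTop
      (𝓝 (Kop κ (plim κ) x / Iop κ (plim κ))) :=
    (Kop_tendsto hK hx).div (Iop_tendsto hK) (Iop_pos hK (plim_good hK)).ne'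
  have h3 : ∀ n, iter κ (n+1) x = Kop κ (iter κ n) x / Iop κ (iter κ n) := by
    intro n
    rw [iter, Tmap, Set.indicator_of_mem hx]
  exact tendsto_nhds_unique (h1.congr h3) h2

end Limit

section Unique
variable {κ : ℝ → ℝ → ℝ} {m : ℝ} (hK : Ker κ m)
include hK

/-- generalized lower bound for `Kop` -/
lemma Kop_lb' {f : ℝ → ℝ} (hfm : Measurable f) (hnn : ∀ x, 0 ≤ f x)
    (hfi : IntegrableOn f I01) (hone : ∫ x in I01, f x = 1) {x : ℝ} (hx : x ∈ I01) :
    m ≤ Kop κ f x := by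
  have h1 : ∫ u in I01, m * f u = m := by
    rw [integral_const_mul, hone, mul_one]
  rw [← h1]
  refine setIntegral_mono_on (hfi.const_mul m)
    (integrable_kernel_mul hK hfm hnn hfi hx) measurableSet_Icc ?_
  exact fun u hu => mul_le_mul_of_nonneg_right (hK.lb x hx u hu) (hnn u)

lemma Kop_ub' {f : ℝ → ℝ} (hfm : Measurable f) (hnn : ∀ x, 0 ≤ f x)
    (hfi : IntegrableOn f I01) (hone : ∫ x in I01, f x = 1) {x : ℝ} (hx : x ∈ I01) :
    Kop κ f x ≤ 1 := by
  rw [← hone]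
  refine setIntegral_mono_on (integrable_kernel_mul hK hfm hnn hfi hx) hfi
    measurableSet_Icc (fun u hu => ?_)
  calc κ x u * f u ≤ 1 * f u := mul_le_mul_of_nonneg_right (hK.ub x hx u hu) (hnn u)
  _ = f u := one_mul _

/-- Uniqueness: any normalized nonneg density satisfying the eigen-equation
a.e. agrees a.e. with `plim κ`. -/
lemma density_unique {p' : ℝ → ℝ} (hp'meas : Measurable p') (hp'nn : ∀ y, 0 ≤ p' y)
    (hp'int : IntegrableOn p' I01) (hone : ∫ x in I01, p' x = 1)
    (heq : ∀ᵐ x ∂μ01, p' x = (Iop κ (plim κ))⁻¹ * ∫ u in I01, κ x u * p' u) :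
    p' =ᵐ[μ01] plim κ := by
  have hP := plim_good hK
  set c : ℝ := (Iop κ (plim κ))⁻¹ with hcdef
  have hI := Iop_pos hK hP
  have hIub := Iop_ub hK hP
  have hIlb := Iop_lb hK hP
  have hc0 : 0 < c := inv_pos.2 hI
  have hc1 : 1 ≤ c := by
    rw [hcdef, le_inv_comm₀] <;> simp [hI, hIub]
  have hcm : c ≤ 1/m := by
    rw [hcdef, one_div]
    exact inv_anti₀ hK.hm hIlb
  -- the regularized version of p'
  set q : ℝ → ℝ := fun x => c * ∫ u in I01, κ x u * p' u with hqdef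
  have hqae : p' =ᵐ[μ01] q := heq
  have hqmeas : Measurable q := (measurable_Kop hK.meas hp'meas).const_mul c
  have hKp'lb : ∀ x ∈ I01, m ≤ Kop κ p' x :=
    fun x hx => Kop_lb' hK hp'meas hp'nn hp'int hone hx
  have hKp'ub : ∀ x ∈ I01, Kop κ p' x ≤ 1 :=
    fun x hx => Kop_ub' hK hp'meas hp'nn hp'int hone hx
  have hqlb : ∀ x ∈ I01, c * m ≤ q x := by
    intro x hx
    exact mul_le_mul_of_nonneg_left (hKp'lb x hx) hc0.le
  have hqub : ∀ x ∈ I01, q x ≤ c := by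
    intro x hx
    calc q x ≤ c * 1 := mul_le_mul_of_nonneg_left (hKp'ub x hx) hc0.le
    _ = c := mul_one c
  have hq0 : ∀ x ∈ I01, 0 < q x := by
    intro x hx
    calc (0:ℝ) < c * m := mul_pos hc0 hK.hm
    _ ≤ q x := hqlb x hx
  have hqint : IntegrableOn q I01 := by
    refine integrableOn_of_bounded hqmeas (C := c) (fun x hx => ?_)
    rw [abs_of_nonneg (le_trans (mul_pos hc0 hK.hm).le (hqlb x hx))]
    exact hqub x hx
  have hqone : ∫ x in I01, q x = 1 := by
    calc ∫ x in I01, q x = ∫ x in I01, p' x := integral_congr_ae hqae.symm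
    _ = 1 := hone
  -- equation for q, everywhere on I01
  have hqeq : ∀ x ∈ I01, q x = c * Kop κ q x := by
    intro x hx
    have h5 : Kop κ q x = Kop κ p' x := by
      refine integral_congr_ae ?_
      exact hqae.mono (fun u hu => by dsimp only; rw [hu])
    rw [hqdef]
    dsimp only
    rw [h5, Kop]
  -- equation and bounds for P := plim κ
  have hPeq : ∀ x ∈ I01, plim κ x = c * Kop κ (plim κ) x := by
    intro x hx
    rw [plim_eq hK hx, hcdef, div_eq_inv_mul]
  have hPlb : ∀ x ∈ I01, c * m ≤ plim κ x := by
    intro x hx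
    rw [hPeq x hx]
    exact mul_le_mul_of_nonneg_left (Kop_lb hK hP hx) hc0.le
  -- the comparison infimum
  set S : Set ℝ := (fun x => plim κ x / q x) '' I01 with hSdef
  have hSne : S.Nonempty := ⟨_, ⟨0, Set.left_mem_Icc.2 zero_le_one, rfl⟩⟩
  have hSlb : ∀ y ∈ S, m ≤ y := by
    rintro y ⟨x, hx, rfl⟩
    dsimp only
    rw [le_div_iff₀ (hq0 x hx)]
    calc m * q x ≤ m * c := mul_le_mul_of_nonneg_left (hqub x hx) hK.hm.le
    _ = c * m := mul_comm _ _
    _ ≤ plim κ x := hPlb x hx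
  set s : ℝ := sInf S with hsdef
  have hs0 : m ≤ s := le_csInf hSne hSlb
  have hsle : ∀ x ∈ I01, s * q x ≤ plim κ x := by
    intro x hx
    have h1 : s ≤ plim κ x / q x := csInf_le ⟨m, hSlb⟩ ⟨x, hx, rfl⟩
    rw [le_div_iff₀ (hq0 x hx)] at h1
    linarith
  have hs1 : s ≤ 1 := by
    have h1 : ∫ x in I01, s * q x ≤ ∫ x in I01, plim κ x :=
      setIntegral_mono_on (hqint.const_mul s) hP.integrableOn measurableSet_Icc hsle
    rwa [integral_const_mul, hqone, mul_one, hP.int_one] at h1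
  have hrint : IntegrableOn (fun u => plim κ u - s * q u) I01 :=
    hP.integrableOn.sub (hqint.const_mul s)
  have hrone : ∫ u in I01, (plim κ u - s * q u) = 1 - s := by
    rw [integral_sub hP.integrableOn (hqint.const_mul s), integral_const_mul,
      hqone, hP.int_one, mul_one]
  have hkey : ∀ x ∈ I01, s + m * (1 - s) ≤ plim κ x / q x := by
    intro x hx
    have hp_ki := integrable_kernel_mul hK hP.meas hP.nonneg hP.integrableOn hx
    have hq_ki : IntegrableOn (fun u => κ x u * q u) I01 := by
      refine integrableOn_of_bounded ((hK.meas.comp measurable_prodMk_left).mul hqmeas)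
        (C := c) (fun u hu => ?_)
      rw [abs_of_nonneg (mul_nonneg (hK.knn hx hu) (hq0 u hu).le)]
      calc κ x u * q u ≤ 1 * q u :=
        mul_le_mul_of_nonneg_right (hK.ub x hx u hu) (hq0 u hu).le
      _ = q u := one_mul _
      _ ≤ c := hqub u hu
    have e2 : Kop κ (plim κ) x - s * Kop κ q x
        = ∫ u in I01, κ x u * (plim κ u - s * q u) := by
      rw [Kop, Kop, ← integral_const_mul s,
        ← integral_sub hp_ki ((hq_ki.const_mul s))]
      refine setIntegral_congr_fun measurableSet_Icc (fun u _ => ?_)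
      ring
    have e3 : m * (1 - s) ≤ ∫ u in I01, κ x u * (plim κ u - s * q u) := by
      have e4 : ∫ u in I01, m * (plim κ u - s * q u) = m * (1 - s) := by
        rw [integral_const_mul, hrone]
      rw [← e4]
      have hki : IntegrableOn (fun u => κ x u * (plim κ u - s * q u)) I01 := by
        refine (hp_ki.sub (hq_ki.const_mul s)).congr (Eventually.of_forall (fun u => ?_))
        simp only [Pi.sub_apply]
        ring
      refine setIntegral_mono_on (hrint.const_mul m) hki measurableSet_Icc (fun u hu => ?_)
      have hru : 0 ≤ plim κ u - s * q u := by linarith [hsle u hu]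
      exact mul_le_mul_of_nonneg_right (hK.lb x hx u hu) hru
    have hdiff : c * (m * (1 - s)) ≤ plim κ x - s * q x := by
      have e1 : plim κ x - s * q x = c * (Kop κ (plim κ) x - s * Kop κ q x) := by
        rw [hPeq x hx, hqeq x hx]; ring
      rw [e1, e2]
      exact mul_le_mul_of_nonneg_left e3 hc0.le
    rw [le_div_iff₀ (hq0 x hx)]
    have h6 : m * (1 - s) * q x ≤ m * (1 - s) * c :=
      mul_le_mul_of_nonneg_left (hqub x hx) (mul_nonneg hK.hm.le (by linarith))
    nlinarith [hsle x hx]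
  have hs_ge : s + m * (1 - s) ≤ s := by
    rw [hsdef]
    refine le_csInf hSne ?_
    rintro y ⟨x, hx, rfl⟩
    exact hkey x hx
  have hs_eq : s = 1 := by nlinarith [hK.hm]
  have hfinal : ∀ x ∈ I01, q x ≤ plim κ x := by
    intro x hx
    have := hsle x hx
    rw [hs_eq, one_mul] at this
    exact this
  have hzero : ∫ x in I01, (plim κ x - q x) = 0 := by
    rw [integral_sub hP.integrableOn hqint, hqone, hP.int_one, sub_self]
  have hdiffnn' : ∀ᵐ x ∂μ01, 0 ≤ plim κ x - q x := by
    rw [ae_restrict_iff' measurableSet_Icc]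
    exact Eventually.of_forall (fun x hx => by simp [hfinal x hx])
  have hdiffnn : 0 ≤ᵐ[μ01] fun x => plim κ x - q x := hdiffnn'
  have hae : (fun x => plim κ x - q x) =ᵐ[μ01] 0 :=
    (integral_eq_zero_iff_of_nonneg_ae hdiffnn (hP.integrableOn.sub hqint)).1 hzero
  have hqP : q =ᵐ[μ01] plim κ := by
    refine hae.mono (fun x hx => ?_)
    have : plim κ x - q x = 0 := hx
    linarith
  exact hqae.trans hqP
end Unique

lemma withDensity_prob {f : ℝ → ℝ} (hfm : Measurable f) (hnn : ∀ x, 0 ≤ f x)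
    (hfi : IntegrableOn f I01) (hone : ∫ x in I01, f x = 1) :
    IsProbabilityMeasure ((volume.restrict (Set.Icc (0:ℝ) 1)).withDensity fun y => ENNReal.ofReal (f y)) := by
  constructor
  rw [withDensity_apply _ MeasurableSet.univ, Measure.restrict_univ]
  have h := ofReal_integral_eq_lintegral_ofReal hfi (Eventually.of_forall hnn)
  rw [← h, hone, ENNReal.ofReal_one]

/-- for `λ > 0` and a standard kernel `κ` bounded below by a positive
constant on `[0,1]²`, there exist a Malthusian parameter `α* > -1` and a unique
probability measure `π` on `[0,1]`, absolutely continuous with respect to Lebesgue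
measure, whose density `p` satisfies
`p(x) = (λ/(1+α*)) ∫_0^1 κ(x,u) p(u) du` for almost every `x ∈ [0,1]`. -/
theorem malthusian_eigenmeasure
    (lam : ℝ) (hlam : 0 < lam)
    (κ : ℝ → ℝ → ℝ) (hκmeas : Measurable (Function.uncurry κ))
    (hκsymm : ∀ a ∈ Set.Icc (0:ℝ) 1, ∀ b ∈ Set.Icc (0:ℝ) 1, κ a b = κ b a)
    (hκrange : ∀ a ∈ Set.Icc (0:ℝ) 1, ∀ b ∈ Set.Icc (0:ℝ) 1, κ a b ∈ Set.Icc (0:ℝ) 1)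
    (hκinf : 0 < sInf (Set.image2 κ (Set.Icc (0:ℝ) 1) (Set.Icc (0:ℝ) 1))) :
    ∃ αs : ℝ, -1 < αs ∧
      ∃! π : Measure ℝ, IsProbabilityMeasure π ∧
        ∃ p : ℝ → ℝ, Measurable p ∧ (∀ y, 0 ≤ p y) ∧
          π = (volume.restrict (Set.Icc (0:ℝ) 1)).withDensity
            (fun y => ENNReal.ofReal (p y)) ∧
          ∀ᵐ x ∂(volume.restrict (Set.Icc (0:ℝ) 1)),
            p x = lam / (1 + αs) * ∫ u in Set.Icc (0:ℝ) 1, κ x u * p u := by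
  classical
  set m : ℝ := sInf (Set.image2 κ (Set.Icc (0:ℝ) 1) (Set.Icc (0:ℝ) 1)) with hmdef
  have hbdd : BddBelow (Set.image2 κ (Set.Icc (0:ℝ) 1) (Set.Icc (0:ℝ) 1)) := by
    refine ⟨0, ?_⟩
    rintro y ⟨a, ha, b, hb, rfl⟩
    exact (hκrange a ha b hb).1
  have hlbm : ∀ a ∈ I01, ∀ b ∈ I01, m ≤ κ a b := by
    intro a ha b hb
    exact csInf_le hbdd (Set.mem_image2_of_mem ha hb)
  have h01 : (0:ℝ) ∈ I01 := Set.left_mem_Icc.2 zero_le_one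
  have hm1 : m ≤ 1 := le_trans (hlbm 0 h01 0 h01) (hκrange 0 h01 0 h01).2
  have hKer : Ker κ m := ⟨hκinf, hm1, hκmeas, hlbm, fun a ha b hb => (hκrange a ha b hb).2⟩
  have hP := plim_good hKer
  have hIpos := Iop_pos hKer hP
  refine ⟨lam * Iop κ (plim κ) - 1, by nlinarith, ?_⟩
  have hcoef : lam / (1 + (lam * Iop κ (plim κ) - 1)) = (Iop κ (plim κ))⁻¹ := by
    rw [show 1 + (lam * Iop κ (plim κ) - 1) = lam * Iop κ (plim κ) by ring]
    rw [div_mul_eq_div_div, div_self hlam.ne', one_div]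
  refine ⟨(volume.restrict (Set.Icc (0:ℝ) 1)).withDensity (fun y => ENNReal.ofReal (plim κ y)),
    ⟨withDensity_prob hP.meas hP.nonneg hP.integrableOn hP.int_one,
      plim κ, hP.meas, hP.nonneg, rfl, ?_⟩, ?_⟩
  · filter_upwards [ae_restrict_mem measurableSet_Icc] with x hx
    rw [hcoef,
      show (∫ u in Set.Icc (0:ℝ) 1, κ x u * plim κ u) = Kop κ (plim κ) x from rfl,
      ← div_eq_inv_mul]
    exact plim_eq hKer hx
  · rintro π' ⟨hprob', p', hp'meas, hp'nn, hπ'def, hp'eq⟩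
    have h1 : π' Set.univ = 1 := hprob'.measure_univ
    rw [hπ'def, withDensity_apply _ MeasurableSet.univ, Measure.restrict_univ] at h1
    have hfin : HasFiniteIntegral p' μ01 :=
      (hasFiniteIntegral_iff_ofReal (Eventually.of_forall hp'nn)).2
        (by rw [h1]; exact ENNReal.one_lt_top)
    have hint : IntegrableOn p' I01 := ⟨hp'meas.aestronglyMeasurable, hfin⟩
    have hone : ∫ x in I01, p' x = 1 := by
      rw [integral_eq_lintegral_of_nonneg_ae (Eventually.of_forall hp'nn)
        hp'meas.aestronglyMeasurable, h1]
      simp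
    have heq' : ∀ᵐ x ∂μ01, p' x = (Iop κ (plim κ))⁻¹ * ∫ u in I01, κ x u * p' u := by
      refine hp'eq.mono (fun x hx => ?_)
      rwa [hcoef] at hx
    have hae := density_unique hKer hp'meas hp'nn hint hone heq'
    rw [hπ'def]
    exact withDensity_congr_ae (hae.mono (fun x hx => by dsimp only; rw [hx]))
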